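/- Let (⋯ → G₂ →p₁→ G₁ →p₀→ G₀) be an inverse sequence of countable groups. If the derived limit lim¹ Gᵢ is countable (for example, trivial), then the sequence satisfies the Mittag-Leffler condition. -/
import Mathlib


/-- An inverse sequence of groups `⋯ → G₂ → G₁ → G₀`, presented by its compatible
composite bonding homomorphisms `bond h : G j →* G i` for `i ≤ j`; the one-step
bonding maps `pᵢ` are `bond (Nat.le_succ i) : G (i+1) →* G i`. -/
structure GroupInvSeq (G : ℕ → Type) [∀ i, Group (G i)] : Type where
  bond : ∀ ⦃i j : ℕ⦄, i ≤ j → (G j →* G i)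
  bond_refl : ∀ i, bond (le_refl i) = MonoidHom.id (G i)
  bond_comp : ∀ ⦃i j k : ℕ⦄ (hij : i ≤ j) (hjk : j ≤ k),
    (bond hij).comp (bond hjk) = bond (hij.trans hjk)

namespace GroupInvSeq

variable {G : ℕ → Type} [∀ i, Group (G i)]

/-- The orbit relation on `∏ᵢ Gᵢ` of the right action
`(g₀,g₁,…)·(x₀,x₁,…) = (x₀⁻¹g₀p₀(x₁), x₁⁻¹g₁p₁(x₂), …)`; its orbit set is `lim¹`. -/
def lim1Rel (S : GroupInvSeq G) (g g' : ∀ i, G i) : Prop :=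
  ∃ x : ∀ i, G i, ∀ i, g' i = (x i)⁻¹ * g i * S.bond (Nat.le_succ i) (x (i + 1))

/-- The derived limit `lim¹` of an inverse sequence of groups: the orbit set of the
action above, pointed at the class of the identity. -/
def lim1 (S : GroupInvSeq G) : Type :=
  Quot S.lim1Rel

/-- The Mittag-Leffler condition: for each `i` there is `j > i` such that for all
`k > j` the image of `G k → G i` equals the image of `G j → G i`. -/
def MittagLeffler (S : GroupInvSeq G) : Prop :=
  ∀ i, ∃ j, ∃ hij : i < j, ∀ k, ∀ hjk : j < k,
    Set.range (S.bond (hij.le.trans hjk.le)) = Set.range (S.bond hij.le)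

end GroupInvSeq

namespace MLAux

section Grp
variable {H : Type} [Group H]

/-- ordered partial products: `pprod b N = b 0 * b 1 * ⋯ * b (N-1)` -/
def pprod (b : ℕ → H) : ℕ → H
  | 0 => 1
  | N + 1 => pprod b N * b N

theorem pprod_tele (a b b' : ℕ → H)
    (hrel : ∀ n, b' n = (a n)⁻¹ * b n * a (n + 1)) :
    ∀ N, pprod b' N = (a 0)⁻¹ * pprod b N * a N := by
  intro N
  induction N with
  | zero => simp [pprod]
  | succ N ih =>
    show pprod b' N * b' N = (a 0)⁻¹ * (pprod b N * b N) * a (N + 1)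
    rw [ih, hrel N]
    group

theorem pprod_ones (b : ℕ → H) (M : ℕ) :
    ∀ N, M ≤ N → (∀ n, M ≤ n → n < N → b n = 1) → pprod b N = pprod b M := by
  intro N
  induction N with
  | zero => intro h _; cases Nat.le_zero.mp h; rfl
  | succ N ih =>
    intro h h1
    rcases eq_or_lt_of_le h with e | l
    · rw [e]
    · have hMN : M ≤ N := Nat.lt_succ_iff.mp l
      show pprod b N * b N = _
      rw [h1 N hMN (Nat.lt_succ_self N), mul_one,
        ih hMN (fun n hn hn' => h1 n hn (hn'.trans (Nat.lt_succ_self N)))]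

/-- the selected partial product `Q y σ K = ∏_{k<K} (if σ k then y k else 1)` -/
def selProd (y : ℕ → H) (σ : ℕ → Bool) : ℕ → H
  | 0 => 1
  | K + 1 => selProd y σ K * (if σ K then y K else 1)

theorem selProd_congr (y : ℕ → H) (σ τ : ℕ → Bool) :
    ∀ K, (∀ k, k < K → σ k = τ k) → selProd y σ K = selProd y τ K := by
  intro K
  induction K with
  | zero => intro _; rfl
  | succ K ih =>
    intro hlt
    show selProd y σ K * _ = selProd y τ K * _
    rw [ih (fun k hk => hlt k (hk.trans (Nat.lt_succ_self K))),
      hlt K (Nat.lt_succ_self K)]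

end Grp

section Seq
variable {G : ℕ → Type} [∀ i, Group (G i)]

theorem bond_cast (S : GroupInvSeq G) {i n n' : ℕ} (e : n = n') (h : i ≤ n)
    (h' : i ≤ n') (u : G n) : S.bond h' (e ▸ u) = S.bond h u := by
  subst e; rfl

theorem bond_eval (S : GroupInvSeq G) {i n n' : ℕ} (e : n = n') (h : i ≤ n)
    (h' : i ≤ n') (f : ∀ t, G t) : S.bond h (f n) = S.bond h' (f n') := by
  subst e; rfl

theorem bond_bond (S : GroupInvSeq G) {i j k : ℕ} (hij : i ≤ j) (hjk : j ≤ k)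
    (hik : i ≤ k) (u : G k) : S.bond hij (S.bond hjk u) = S.bond hik u :=
  DFunLike.congr_fun (S.bond_comp hij hjk) u

theorem lim1Rel_equivalence (S : GroupInvSeq G) : Equivalence S.lim1Rel := by
  constructor
  · intro g
    exact ⟨fun _ => 1, fun n => by simp⟩
  · rintro g g' ⟨x, hx⟩
    refine ⟨fun n => (x n)⁻¹, fun n => ?_⟩
    rw [hx n]
    simp [map_inv]
    group
  · rintro g g' g'' ⟨x, hx⟩ ⟨x', hx'⟩
    refine ⟨fun n => x n * x' n, fun n => ?_⟩
    rw [hx' n, hx n]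
    simp [map_mul, mul_inv_rev]
    group

end Seq


section Seq2
variable {G : ℕ → Type} [∀ i, Group (G i)]

open scoped Classical in
/-- the distinguishing element of `∏ G n`: `z k` at level `m k`, `1` elsewhere,
with `z k` switched off when `σ k = false`. -/
noncomputable def gg (m : ℕ → ℕ) (z : ∀ k, G (m k)) (σ : ℕ → Bool) : ∀ n, G n :=
  fun n =>
    if h : ∃ k, m k = n then h.choose_spec ▸ (if σ h.choose then z h.choose else 1)
    else 1

theorem gg_not (m : ℕ → ℕ) (z : ∀ k, G (m k)) (σ : ℕ → Bool) {n : ℕ}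
    (h : ¬ ∃ k, m k = n) : gg m z σ n = 1 := dif_neg h

theorem bond_gg_m (S : GroupInvSeq G) {i : ℕ} {m : ℕ → ℕ}
    (hminj : Function.Injective m) (hm0 : ∀ k, i < m k) (z : ∀ k, G (m k))
    (σ : ℕ → Bool) (k : ℕ) (h : i ≤ m k) :
    S.bond h (gg m z σ (m k)) =
      if σ k then S.bond (hm0 k).le (z k) else 1 := by
  have he : ∃ k', m k' = m k := ⟨k, rfl⟩
  have step : S.bond h (gg m z σ (m k)) =
      (fun k => if σ k then S.bond (hm0 k).le (z k) else 1) he.choose := by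
    simp only [gg]
    rw [dif_pos he,
      bond_cast S he.choose_spec (hm0 he.choose).le h,
      apply_ite (S.bond (hm0 he.choose).le), map_one]
  rw [step, hminj he.choose_spec]

theorem pprod_gg (S : GroupInvSeq G) {i : ℕ} {m : ℕ → ℕ} (hm : StrictMono m)
    (hm00 : m 0 = i + 1) (hm0 : ∀ k, i < m k) (z : ∀ k, G (m k)) (σ : ℕ → Bool) :
    ∀ K, pprod (fun n => S.bond (Nat.le_add_right i n) (gg m z σ (i + n))) (m K - i)
      = selProd (fun k => S.bond (hm0 k).le (z k)) σ K := by
  set b := fun n => S.bond (Nat.le_add_right i n) (gg m z σ (i + n)) with hb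
  have hout : ∀ k0 n, m k0 < i + n → i + n < m (k0 + 1) → b n = 1 := by
    intro k0 n h1 h2
    have : ¬ ∃ k, m k = i + n := by
      rintro ⟨k, hk⟩
      have l1 : k0 < k := hm.lt_iff_lt.mp (by omega)
      have l2 : k < k0 + 1 := hm.lt_iff_lt.mp (by omega)
      omega
    simp only [hb]
    rw [gg_not m z σ this, map_one]
  intro K
  induction K with
  | zero =>
    have e1 : m 0 - i = 1 := by omega
    rw [e1]
    show (1 : G i) * b 0 = 1
    have : ¬ ∃ k, m k = i + 0 := by
      rintro ⟨k, hk⟩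
      exact absurd hk (by have := hm0 k; omega)
    simp only [hb]
    rw [gg_not m z σ this, map_one, mul_one]
  | succ K ih =>
    have hlt : m K < m (K + 1) := hm (Nat.lt_succ_self K)
    have hK := hm0 K
    have hK1 := hm0 (K + 1)
    have e1 : m K - i + 1 ≤ m (K + 1) - i := by omega
    rw [pprod_ones b (m K - i + 1) (m (K + 1) - i) e1
      (fun n hn hn' => hout K n (by omega) (by omega))]
    show pprod b (m K - i) * b (m K - i) = _
    rw [ih]
    have eK : i + (m K - i) = m K := by omega
    have : b (m K - i) = if σ K then S.bond (hm0 K).le (z K) else 1 := by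
      simp only [hb]
      rw [bond_eval S eK (Nat.le_add_right i (m K - i)) (hm0 K).le (gg m z σ),
        bond_gg_m S hm.injective hm0 z σ K]
    rw [this]
    rfl

/-- the coset relation determining equivalence classes -/
def krel (S : GroupInvSeq G) {i : ℕ} (m : ℕ → ℕ) (hm0 : ∀ k, i < m k)
    (y : ℕ → G i) (c : G i) (σ τ : ℕ → Bool) : Prop :=
  ∀ K, ∃ w : G (m K), S.bond (hm0 K).le w = (selProd y σ K)⁻¹ * c * selProd y τ K

theorem krel_unique (S : GroupInvSeq G) {i : ℕ} (m : ℕ → ℕ) (hm0 : ∀ k, i < m k)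
    (y : ℕ → G i) (hy : ∀ K, ∀ w : G (m (K + 1)), S.bond (hm0 (K + 1)).le w ≠ y K)
    (c : G i) (σ τ τ' : ℕ → Bool) (h1 : krel S m hm0 y c σ τ)
    (h2 : krel S m hm0 y c σ τ') : τ = τ' := by
  have key : ∀ K, (∀ k, k < K → τ k = τ' k) → τ K = τ' K := by
    intro K hlt
    obtain ⟨w1, hw1⟩ := h1 (K + 1)
    obtain ⟨w2, hw2⟩ := h2 (K + 1)
    have hQ : selProd y τ K = selProd y τ' K := selProd_congr y τ τ' K hlt
    have he1 : selProd y τ (K + 1) = selProd y τ K * (if τ K then y K else 1) := rfl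
    have he2 : selProd y τ' (K + 1) = selProd y τ K * (if τ' K then y K else 1) := by
      rw [hQ]; rfl
    by_contra hne
    have hw : S.bond (hm0 (K + 1)).le (w1⁻¹ * w2)
        = (if τ K then y K else 1)⁻¹ * (if τ' K then y K else 1) := by
      rw [map_mul, map_inv, hw1, hw2, he1, he2]
      group
    cases hτ : τ K <;> cases hτ' : τ' K
    · rw [hτ, hτ'] at hne; exact hne rfl
    · rw [hτ, hτ'] at hw
      rw [if_neg Bool.false_ne_true, if_pos rfl, inv_one, one_mul] at hw
      exact hy K _ hw
    · rw [hτ, hτ'] at hw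
      rw [if_neg Bool.false_ne_true, if_pos rfl, mul_one] at hw
      have : S.bond (hm0 (K + 1)).le ((w1⁻¹ * w2)⁻¹) = y K := by
        rw [map_inv, hw, inv_inv]
      exact hy K _ this
    · rw [hτ, hτ'] at hne; exact hne rfl
  funext K
  induction K using Nat.strong_induction_on with
  | _ K ih => exact key K ih

theorem krel_of_rel (S : GroupInvSeq G) {i : ℕ} {m : ℕ → ℕ} (hm : StrictMono m)
    (hm00 : m 0 = i + 1) (hm0 : ∀ k, i < m k) (z : ∀ k, G (m k)) (σ τ : ℕ → Bool)
    (h : S.lim1Rel (gg m z σ) (gg m z τ)) :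
    ∃ c, krel S m hm0 (fun k => S.bond (hm0 k).le (z k)) c σ τ := by
  obtain ⟨x, hx⟩ := h
  set a : ℕ → G i := fun n => S.bond (Nat.le_add_right i n) (x (i + n)) with ha
  set b : ℕ → G i := fun n => S.bond (Nat.le_add_right i n) (gg m z σ (i + n)) with hbd
  set b' : ℕ → G i := fun n => S.bond (Nat.le_add_right i n) (gg m z τ (i + n)) with hbd'
  have hrel : ∀ n, b' n = (a n)⁻¹ * b n * a (n + 1) := by
    intro n
    simp only [ha, hbd, hbd']
    rw [hx (i + n), map_mul, map_mul, map_inv]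
    congr 1
    exact bond_bond S (Nat.le_add_right i n) (Nat.le_succ (i + n))
      (Nat.le_add_right i (n + 1)) (x (i + n + 1))
  refine ⟨a 0, fun K => ?_⟩
  have htel := pprod_tele a b b' hrel (m K - i)
  rw [pprod_gg S hm hm00 hm0 z σ K, pprod_gg S hm hm00 hm0 z τ K] at htel
  refine ⟨x (m K), ?_⟩
  have eK : i + (m K - i) = m K := by have := hm0 K; omega
  have : a (m K - i) = S.bond (hm0 K).le (x (m K)) :=
    bond_eval S eK (Nat.le_add_right i (m K - i)) (hm0 K).le x
  rw [← this, htel]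
  group

end Seq2


theorem range_congr {G : ℕ → Type} [∀ i, Group (G i)] (S : GroupInvSeq G)
    {i n n' : ℕ} (e : n = n') (h : i ≤ n) (h' : i ≤ n') :
    Set.range (S.bond h) = Set.range (S.bond h') := by
  subst e; rfl

end MLAux


open MLAux in
/-- If the derived limit `lim¹ Gᵢ` of an inverse sequence of countable groups is
countable, then the sequence satisfies the Mittag-Leffler condition. -/
theorem mittagLeffler_of_countable_lim1 {G : ℕ → Type} [∀ i, Group (G i)]
    [∀ i, Countable (G i)] (S : GroupInvSeq G) (h : Countable S.lim1) :
    S.MittagLeffler := by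
  classical
  by_contra hML
  unfold GroupInvSeq.MittagLeffler at hML
  push_neg at hML
  obtain ⟨i, hi⟩ := hML
  let next : {j // i < j} → {j // i < j} := fun j =>
    ⟨(hi j.1 j.2).choose, j.2.trans (hi j.1 j.2).choose_spec.choose⟩
  let mm : ℕ → {j // i < j} := fun K => next^[K] ⟨i + 1, Nat.lt_succ_self i⟩
  let m : ℕ → ℕ := fun K => (mm K).1
  have hm0 : ∀ K, i < m K := fun K => (mm K).2
  have hmm : ∀ K, mm (K + 1) = next (mm K) := fun K =>
    Function.iterate_succ_apply' next K _
  have key : ∀ K, m K < m (K + 1) ∧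
      Set.range (S.bond (hm0 (K + 1)).le) ≠ Set.range (S.bond (hm0 K).le) := by
    intro K
    have e1 : m (K + 1) = (hi (m K) (hm0 K)).choose := congrArg Subtype.val (hmm K)
    constructor
    · rw [e1]
      exact (hi (m K) (hm0 K)).choose_spec.choose
    · have h2 := (hi (m K) (hm0 K)).choose_spec.choose_spec
      intro hEq
      exact h2 ((range_congr S e1 (hm0 (K + 1)).le (e1 ▸ (hm0 (K + 1)).le)).symm.trans hEq)
  have hm : StrictMono m := strictMono_nat_of_lt_succ (fun K => (key K).1)
  have hm00 : m 0 = i + 1 := rfl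
  have hz : ∀ K, ∃ zz : G (m K), ∀ w : G (m (K + 1)),
      S.bond (hm0 (K + 1)).le w ≠ S.bond (hm0 K).le zz := by
    intro K
    by_contra hcon
    push_neg at hcon
    apply (key K).2
    apply Set.Subset.antisymm
    · rintro u ⟨v, rfl⟩
      exact ⟨S.bond ((key K).1).le v,
        bond_bond S (hm0 K).le ((key K).1).le (hm0 (K + 1)).le v⟩
    · rintro u ⟨v, rfl⟩
      obtain ⟨w, hw⟩ := hcon v
      exact ⟨w, hw⟩
  let z : ∀ K, G (m K) := fun K => (hz K).choose
  have hy : ∀ K, ∀ w : G (m (K + 1)),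
      S.bond (hm0 (K + 1)).le w ≠ S.bond (hm0 K).le (z K) :=
    fun K => (hz K).choose_spec
  let F : (ℕ → Bool) → S.lim1 := fun σ => Quot.mk _ (gg m z σ)
  have hcnt : Countable (ℕ → Bool) := by
    have hfib : ∀ q : S.lim1, Countable {τ : ℕ → Bool // F τ = q} := by
      intro q
      rcases isEmpty_or_nonempty {τ : ℕ → Bool // F τ = q} with hE | hne
      · exact Subsingleton.to_countable
      · obtain ⟨⟨σ₀, hσ₀⟩⟩ := hne
        have hex : ∀ τ : {τ : ℕ → Bool // F τ = q},
            ∃ c, krel S m hm0 (fun k => S.bond (hm0 k).le (z k)) c σ₀ τ.1 := by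
          rintro ⟨τ, hτ⟩
          apply krel_of_rel S hm hm00 hm0 z
          have hq : Quot.mk S.lim1Rel (gg m z σ₀) = Quot.mk S.lim1Rel (gg m z τ) :=
            hσ₀.trans hτ.symm
          exact ((lim1Rel_equivalence S).eqvGen_iff).mp (Quot.eqvGen_exact hq)
        refine Function.Injective.countable (f := fun τ => (hex τ).choose) ?_
        intro τ τ' hcc
        have hcc' : (hex τ).choose = (hex τ').choose := hcc
        apply Subtype.ext
        exact krel_unique S m hm0 (fun k => S.bond (hm0 k).le (z k)) hy _ σ₀ τ.1 τ'.1
          (hex τ).choose_spec (hcc' ▸ (hex τ').choose_spec)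
    exact Function.Injective.countable
      (f := fun τ => (⟨F τ, τ, rfl⟩ : Σ q : S.lim1, {τ : ℕ → Bool // F τ = q}))
      (fun a b hab =>
        congrArg (fun s : Σ q : S.lim1, {τ : ℕ → Bool // F τ = q} => s.2.1) hab)
  obtain ⟨f, hf⟩ := hcnt.exists_injective_nat'
  refine Function.cantor_injective (fun s : Set ℕ => f (fun n => decide (n ∈ s))) ?_
  intro s t hst
  have h2 := hf hst
  ext n
  have h3 := congrFun h2 n
  simpa using h3
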